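/- For w ∈ R^p, let τ(I_p + ww') be the unique lower triangular matrix with positive diagonal satisfying I_p + ww' = τ(I_p+ww') τ(I_p+ww')'. Then the modular function evaluated at this matrix satisfies Δ(τ(I_p + ww')) = ψ_p(w), where ψ_p(w) = (1 + w'w)^{-(p-1)/2} ∏_{i=1}^{p-1} (1 + w_1^2 + ... + w_i^2) for p ≥ 2 and ψ_1(w) = 1. -/

import Mathlib

open Matrix Finset

/-- `T` is lower triangular with strictly positive diagonal entries. -/
def IsLowerPos {p : ℕ} (T : Matrix (Fin p) (Fin p) ℝ) : Prop :=
  (∀ i, 0 < T i i) ∧ ∀ i j, i < j → T i j = 0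

/-- The modular function `Δ(g) = ∏_{i=1}^p g_{ii}^{p - 2i + 1}` on `G_T^+`. -/
noncomputable def Δ {p : ℕ} (g : Matrix (Fin p) (Fin p) ℝ) : ℝ :=
  ∏ i : Fin p, (g i i) ^ ((p : ℤ) - 2 * ((i : ℤ) + 1) + 1)

/-- `ψ_p(w) = (1 + w'w)^{-(p-1)/2} ∏_{i=1}^{p-1} (1 + w_1² + ⋯ + w_i²)`
for `p ≥ 2`, and `ψ_1 ≡ 1` (the formula below reduces to `1` when `p = 1`). -/
noncomputable def ψ {p : ℕ} (w : Fin p → ℝ) : ℝ :=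
  (1 + ∑ i, w i ^ 2) ^ (-(((p : ℝ) - 1) / 2)) *
    ∏ i ∈ Finset.range (p - 1),
      (1 + ∑ j ∈ Finset.univ.filter (fun j : Fin p => (j : ℕ) ≤ i), w j ^ 2)

private lemma filter_lt_eq_image {p k : ℕ} (hk : k ≤ p) :
    Finset.univ.filter (fun j : Fin p => (j : ℕ) < k)
      = (Finset.univ : Finset (Fin k)).image (Fin.castLE hk) := by
  ext j
  simp only [Finset.mem_filter, Finset.mem_univ, true_and, Finset.mem_image]
  constructor
  · intro h; exact ⟨⟨(j : ℕ), h⟩, by ext; rfl⟩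
  · rintro ⟨i, -, rfl⟩; exact i.isLt

private lemma sum_filter_lt {p k : ℕ} (hk : k ≤ p) (f : Fin p → ℝ) :
    ∑ j ∈ Finset.univ.filter (fun j : Fin p => (j : ℕ) < k), f j
      = ∑ i : Fin k, f (Fin.castLE hk i) := by
  rw [filter_lt_eq_image hk, Finset.sum_image (fun a _ b _ h => Fin.castLE_injective hk h)]

/-- If `T = τ(I_p + ww')` is the Cholesky factor of `I_p + ww'` (the unique
lower triangular matrix with positive diagonal such that `I_p + ww' = T T'`),
then `Δ(T) = ψ_p(w)`. -/
theorem modular_of_cholesky_one_add_vecMulVec {p : ℕ} (hp : 1 ≤ p)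
    (w : Fin p → ℝ) (T : Matrix (Fin p) (Fin p) ℝ) (hT : IsLowerPos T)
    (hfac : (1 : Matrix (Fin p) (Fin p) ℝ) + vecMulVec w w = T * Tᵀ) :
    Δ T = ψ w := by
  classical
  -- `d k` : leading principal minor `1 + ∑_{j < k} w j ^ 2`
  set d : ℕ → ℝ := fun k =>
    1 + ∑ j ∈ Finset.univ.filter (fun j : Fin p => (j : ℕ) < k), w j ^ 2 with hd
  have hdpos : ∀ k, 0 < d k := by
    intro k
    have : (0:ℝ) ≤ ∑ j ∈ Finset.univ.filter (fun j : Fin p => (j : ℕ) < k), w j ^ 2 :=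
      Finset.sum_nonneg fun j _ => sq_nonneg _
    simp only [hd]; linarith
  -- `t n` : ℕ-indexed diagonal of `T`
  set t : ℕ → ℝ := fun n => if h : n < p then T ⟨n, h⟩ ⟨n, h⟩ else 1 with ht
  have htpos : ∀ n, 0 < t n := by
    intro n
    by_cases h : n < p
    · simpa only [ht, dif_pos h] using hT.1 _
    · simp [ht, dif_neg h]
  -- Key: product of first k diagonal entries squared equals d k
  have key : ∀ k, k ≤ p → (∏ n ∈ Finset.range k, t n) ^ 2 = d k := by
    intro k hk
    set e : Fin k → Fin p := Fin.castLE hk with he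
    have heinj : Function.Injective e := Fin.castLE_injective hk
    set Tk : Matrix (Fin k) (Fin k) ℝ := T.submatrix e e with hTk
    -- determinant of the leading submatrix of `1 + ww'` is `d k`
    have hdetA : (((1 : Matrix (Fin p) (Fin p) ℝ) + vecMulVec w w).submatrix e e).det
        = d k := by
      have hsubA : ((1 : Matrix (Fin p) (Fin p) ℝ) + vecMulVec w w).submatrix e e
          = 1 + vecMulVec (w ∘ e) (w ∘ e) := by
        ext i j
        simp [Matrix.submatrix_apply, Matrix.one_apply, heinj.eq_iff, vecMulVec_apply]
      rw [hsubA, vecMulVec_eq Unit, Matrix.det_one_add_replicateCol_mul_replicateRow]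
      simp only [hd, dotProduct, Function.comp_apply]
      rw [sum_filter_lt hk (fun j => w j ^ 2)]
      congr 1
      exact Finset.sum_congr rfl fun i _ => (sq (w (e i))).symm
    -- the leading submatrix of `T Tᵀ` is `Tk Tkᵀ`
    have hsubTT : (T * Tᵀ).submatrix e e = Tk * Tkᵀ := by
      ext i j
      simp only [Matrix.submatrix_apply, Matrix.mul_apply, Matrix.transpose_apply, hTk]
      rw [← sum_filter_lt hk (fun l => T (e i) l * T (e j) l)]
      refine (Finset.sum_subset (Finset.subset_univ _) fun l _ hl => ?_).symm
      have hkl : k ≤ (l : ℕ) := le_of_not_gt (by simpa using hl)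
      have : T (e i) l = 0 := hT.2 _ _ (by
        have : (e i : ℕ) < (l : ℕ) := lt_of_lt_of_le i.isLt hkl
        exact Fin.lt_def.mpr this)
      simp [this]
    -- `Tk` is lower triangular
    have hlow : Tk.BlockTriangular OrderDual.toDual := by
      intro i j hij
      have h2 : (i : ℕ) < (j : ℕ) := hij
      exact hT.2 (e i) (e j) (Fin.lt_def.mpr h2)
    have hdetTk : Tk.det = ∏ i : Fin k, Tk i i := Matrix.det_of_lowerTriangular Tk hlow
    have hprod : ∏ n ∈ Finset.range k, t n = ∏ i : Fin k, Tk i i := by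
      rw [← Fin.prod_univ_eq_prod_range t k]
      refine Finset.prod_congr rfl fun i _ => ?_
      have hip : (i : ℕ) < p := lt_of_lt_of_le i.isLt hk
      simp only [ht, dif_pos hip, hTk, Matrix.submatrix_apply]
      rfl
    calc (∏ n ∈ Finset.range k, t n) ^ 2
        = Tk.det * Tkᵀ.det := by
          rw [hprod, hdetTk, Matrix.det_transpose, hdetTk]; ring
      _ = (Tk * Tkᵀ).det := (Matrix.det_mul _ _).symm
      _ = ((T * Tᵀ).submatrix e e).det := by rw [hsubTT]
      _ = d k := by rw [← hfac, hdetA]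
  -- squares of diagonal entries
  have hd0 : d 0 = 1 := by
    simp only [hd]
    rw [Finset.filter_false_of_mem (fun j _ => by simp)]
    simp
  have hdne : ∀ n, d n ≠ 0 := fun n => (hdpos n).ne'
  have htsq : ∀ n, n < p → t n ^ 2 = d (n + 1) / d n := by
    intro n hn
    have h1 := key (n + 1) hn
    have h0 := key n hn.le
    rw [Finset.prod_range_succ, mul_pow, h0] at h1
    rw [eq_div_iff (hdne n)]
    linarith [h1]
  -- `s n = √(d n)`
  set s : ℕ → ℝ := fun n => Real.sqrt (d n) with hs
  have hspos : ∀ n, 0 < s n := fun n => Real.sqrt_pos.mpr (hdpos n)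
  have hsne : ∀ n, s n ≠ 0 := fun n => (hspos n).ne'
  have hs0 : s 0 = 1 := by rw [hs]; simp [hd0]
  have hssq : ∀ n, s n ^ 2 = d n := fun n => Real.sq_sqrt (hdpos n).le
  have htval : ∀ n, n < p → t n = s (n + 1) / s n := by
    intro n hn
    have : t n = Real.sqrt (t n ^ 2) := (Real.sqrt_sq (htpos n).le).symm
    rw [this, htsq n hn, Real.sqrt_div (hdpos (n + 1)).le]
  -- rewrite Δ T as a range product
  obtain ⟨m, rfl⟩ : ∃ m, p = m + 1 := ⟨p - 1, (Nat.succ_pred_eq_of_pos hp).symm⟩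
  have hΔ : Δ T = ∏ n ∈ Finset.range (m + 1),
      (s (n + 1) / s n) ^ (((m : ℤ) + 1) - 2 * n - 1) := by
    rw [Δ, ← Fin.prod_univ_eq_prod_range
      (fun n => (s (n + 1) / s n) ^ (((m : ℤ) + 1) - 2 * n - 1)) (m + 1)]
    refine Finset.prod_congr rfl fun i _ => ?_
    have hi : (i : ℕ) < m + 1 := i.isLt
    have hTt : T i i = t (i : ℕ) := by simp only [ht, dif_pos hi]
    rw [hTt, htval _ hi]
    congr 1
    push_cast
    ring
  -- telescope
  have htel : ∏ n ∈ Finset.range (m + 1),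
      (s (n + 1) / s n) ^ (((m : ℤ) + 1) - 2 * n - 1)
      = (∏ n ∈ Finset.range m, s (n + 1) ^ (2 : ℤ)) * s (m + 1) ^ (-(m : ℤ)) := by
    simp only [div_zpow]
    rw [Finset.prod_div_distrib, Finset.prod_range_succ, Finset.prod_range_succ']
    rw [hs0, _root_.one_zpow, mul_one]
    have hsplit : ∀ n ∈ Finset.range m, s (n + 1) ^ (((m : ℤ) + 1) - 2 * (n : ℕ) - 1)
        = s (n + 1) ^ (2 : ℤ) * s (n + 1) ^ (((m : ℤ) + 1) - 2 * ((n + 1 : ℕ) : ℤ) - 1) := by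
      intro n _
      rw [← zpow_add₀ (hsne (n + 1))]
      congr 1
      push_cast
      ring
    rw [Finset.prod_congr rfl hsplit, Finset.prod_mul_distrib]
    have hm : ((m : ℤ) + 1) - 2 * (m : ℤ) - 1 = -(m : ℤ) := by ring
    rw [hm, mul_right_comm, mul_div_assoc,
      div_self (Finset.prod_ne_zero_iff.mpr fun n _ => zpow_ne_zero _ (hsne (n + 1))), mul_one]
  -- compute ψ
  have hψ : ψ w = (∏ n ∈ Finset.range m, s (n + 1) ^ (2 : ℤ)) * s (m + 1) ^ (-(m : ℤ)) := by
    rw [ψ]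
    have h1 : (1 + ∑ i, w i ^ 2) = d (m + 1) := by
      simp only [hd]
      congr 1
      rw [Finset.filter_true_of_mem (fun j _ => j.isLt)]
    have h2 : ∀ i : ℕ, (1 + ∑ j ∈ Finset.univ.filter (fun j : Fin (m+1) => (j : ℕ) ≤ i),
        w j ^ 2) = d (i + 1) := by
      intro i
      simp only [hd]
      congr 2
      ext j
      simp [Nat.lt_succ_iff]
    have h3 : (d (m + 1)) ^ (-((((m : ℕ) + 1 : ℝ)) - 1) / 2) = s (m + 1) ^ (-(m : ℤ)) := by
      rw [← hssq (m + 1), ← Real.rpow_natCast (s (m + 1)) 2,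
        ← Real.rpow_mul (Real.sqrt_nonneg _), ← Real.rpow_intCast (s (m + 1)) (-(m : ℤ))]
      congr 1
      push_cast
      ring
    rw [h1]
    simp only [Nat.add_sub_cancel, Nat.cast_add, Nat.cast_one]
    rw [mul_comm]
    congr 1
    · exact Finset.prod_congr rfl fun i _ => by
        rw [h2 i, ← hssq (i + 1), zpow_two, pow_two]
    · rw [← h3]
      congr 1
      ring
  rw [hΔ, htel, hψ]
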